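/- (Second-order condition.) Fix n ≥ 1, σ > 0, μ ∈ ℝ, ρ = μ/σ, p = Φ(ρ), q = Φ(−ρ), f = φ(ρ), ν = σ·f/√(q·p·n). Define g : ℝ → ℝ by g(α) = μ·Φ(τ(α)) + ν·φ(τ(α)), where τ(α) = (p − α)·√(n/(q·p)), and let α̂₀ = p·(1 − q·ρ/f). Then the second derivative of g at α̂₀ is strictly negative. -/

import Mathlib

open MeasureTheory ProbabilityTheory

/-- The standard normal density φ(t) = (2π)^{-1/2} e^{-t²/2}. -/
noncomputable def stdNormalPDF (t : ℝ) : ℝ :=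
  (Real.sqrt (2 * Real.pi))⁻¹ * Real.exp (-t ^ 2 / 2)

/-- The standard normal distribution function Φ(x) = ∫_{-∞}^x φ(t) dt. -/
noncomputable def stdNormalCDF (x : ℝ) : ℝ :=
  ∫ t in Set.Iic x, stdNormalPDF t

lemma stdNormalPDF_pos (t : ℝ) : 0 < stdNormalPDF t := by
  unfold stdNormalPDF
  have h2π : 0 < 2 * Real.pi := by positivity
  positivity

lemma integrable_stdNormalPDF : Integrable stdNormalPDF := by
  have h : Integrable (fun x : ℝ => Real.exp (-(1/2 : ℝ) * x ^ 2)) :=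
    integrable_exp_neg_mul_sq (by norm_num)
  have := h.const_mul ((Real.sqrt (2 * Real.pi))⁻¹)
  refine this.congr ?_
  filter_upwards with x
  unfold stdNormalPDF
  ring_nf

lemma continuous_stdNormalPDF : Continuous stdNormalPDF := by
  unfold stdNormalPDF
  continuity

lemma hasDerivAt_stdNormalPDF (t : ℝ) :
    HasDerivAt stdNormalPDF (-t * stdNormalPDF t) t := by
  have h1 : HasDerivAt (fun x : ℝ => -x ^ 2 / 2) (-t) t := by
    have := ((hasDerivAt_pow 2 t).neg).div_const 2
    refine this.congr_deriv ?_
    push_cast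
    ring
  have h2 : HasDerivAt (fun x : ℝ => Real.exp (-x ^ 2 / 2))
      (Real.exp (-t ^ 2 / 2) * (-t)) t := (Real.hasDerivAt_exp _).comp t h1
  have := h2.const_mul ((Real.sqrt (2 * Real.pi))⁻¹)
  unfold stdNormalPDF
  refine this.congr_deriv ?_
  ring

lemma hasDerivAt_stdNormalCDF (x : ℝ) :
    HasDerivAt stdNormalCDF (stdNormalPDF x) x := by
  have hint := integrable_stdNormalPDF
  have key : stdNormalCDF = fun y =>
      stdNormalCDF 0 + ∫ t in (0:ℝ)..y, stdNormalPDF t := by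
    funext y
    have := intervalIntegral.integral_Iic_sub_Iic
      (hint.integrableOn (s := Set.Iic 0)) (hint.integrableOn (s := Set.Iic y))
    unfold stdNormalCDF
    linarith [this]
  rw [key]
  have hd : HasDerivAt (fun y => ∫ t in (0:ℝ)..y, stdNormalPDF t)
      (stdNormalPDF x) x := by
    refine intervalIntegral.integral_hasDerivAt_right
      hint.intervalIntegrable ?_ continuous_stdNormalPDF.continuousAt
    exact continuous_stdNormalPDF.stronglyMeasurableAtFilter _ _
  exact hd.const_add _

lemma stdNormalCDF_pos (x : ℝ) : 0 < stdNormalCDF x := by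
  unfold stdNormalCDF
  rw [MeasureTheory.setIntegral_pos_iff_support_of_nonneg_ae]
  · have : Function.support stdNormalPDF = Set.univ := by
      ext t; simp [(stdNormalPDF_pos t).ne']
    rw [this, Set.univ_inter]
    simp [Real.volume_Iic]
  · filter_upwards with t using (stdNormalPDF_pos t).le
  · exact integrable_stdNormalPDF.integrableOn

/-- Second-order condition: the second derivative of the smoothed expected
increment at α̂₀ = p(1 − qρ/f) is strictly negative. -/
theorem second_order_condition
    (n : ℕ) (hn : 1 ≤ n) (μ σ : ℝ) (hσ : 0 < σ)
    (ρ p q f ν α₀ : ℝ) (hρ : ρ = μ / σ) (hp : p = stdNormalCDF ρ) (hq : q = stdNormalCDF (-ρ))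
    (hf : f = stdNormalPDF ρ) (hν : ν = σ * f / Real.sqrt (q * p * n))
    (hα₀ : α₀ = p * (1 - q * ρ / f))
    (τ g : ℝ → ℝ)
    (hτ : ∀ α, τ α = (p - α) * Real.sqrt (n / (q * p)))
    (hg : ∀ α, g α = μ * stdNormalCDF (τ α) + ν * stdNormalPDF (τ α)) :
    deriv (deriv g) α₀ < 0 := by
  set s : ℝ := Real.sqrt (n / (q * p)) with hs
  have hp0 : 0 < p := hp ▸ stdNormalCDF_pos ρ
  have hq0 : 0 < q := hq ▸ stdNormalCDF_pos (-ρ)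
  have hf0 : 0 < f := hf ▸ stdNormalPDF_pos ρ
  have hn0 : (0:ℝ) < n := by exact_mod_cast hn
  have hqp : 0 < q * p := mul_pos hq0 hp0
  have hs0 : 0 < s := Real.sqrt_pos.mpr (div_pos hn0 hqp)
  have hν0 : 0 < ν := by
    rw [hν]
    have : 0 < Real.sqrt (q * p * n) := Real.sqrt_pos.mpr (by positivity)
    positivity
  -- derivative of τ
  have hτd : ∀ α, HasDerivAt τ (-s) α := by
    intro α
    have h1 : HasDerivAt (fun a : ℝ => (p - a) * s) (-1 * s) α :=
      ((hasDerivAt_id α).const_sub p).mul_const s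
    have : τ = fun a => (p - a) * s := funext hτ
    rw [this]
    simpa using h1
  -- first derivative of g
  have hg' : deriv g = fun α => s * stdNormalPDF (τ α) * (ν * τ α - μ) := by
    funext α
    have hΦ : HasDerivAt (fun a => stdNormalCDF (τ a)) (stdNormalPDF (τ α) * (-s)) α :=
      (hasDerivAt_stdNormalCDF (τ α)).comp α (hτd α)
    have hφ : HasDerivAt (fun a => stdNormalPDF (τ a))
        ((-(τ α) * stdNormalPDF (τ α)) * (-s)) α :=
      (hasDerivAt_stdNormalPDF (τ α)).comp α (hτd α)
    have hgd : HasDerivAt g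
        (μ * (stdNormalPDF (τ α) * (-s)) + ν * ((-(τ α) * stdNormalPDF (τ α)) * (-s))) α := by
      have : g = fun a => μ * stdNormalCDF (τ a) + ν * stdNormalPDF (τ a) := funext hg
      rw [this]
      exact (hΦ.const_mul μ).add (hφ.const_mul ν)
    rw [hgd.deriv]
    ring
  rw [hg']
  -- second derivative
  set t₀ : ℝ := τ α₀ with ht₀
  have hA : HasDerivAt (fun a => stdNormalPDF (τ a)) ((-t₀ * stdNormalPDF t₀) * (-s)) α₀ :=
    (hasDerivAt_stdNormalPDF t₀).comp α₀ (hτd α₀)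
  have hB : HasDerivAt (fun a => ν * τ a - μ) (ν * (-s)) α₀ :=
    ((hτd α₀).const_mul ν).sub_const μ
  have hD : HasDerivAt (fun α => s * stdNormalPDF (τ α) * (ν * τ α - μ))
      (s * (((-t₀ * stdNormalPDF t₀) * (-s)) * (ν * t₀ - μ) + stdNormalPDF t₀ * (ν * (-s)))) α₀ := by
    have := ((hA.mul hB).const_mul s)
    convert this using 2
    · rfl
    · rfl
    · simp only [Pi.mul_apply]
      ring
  rw [hD.deriv]
  -- key algebraic identity: ν * t₀ = μ
  have hsq : Real.sqrt (q * p) * Real.sqrt (q * p) = q * p := Real.mul_self_sqrt hqp.le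
  have hsqn : Real.sqrt (q * p * n) = Real.sqrt (q * p) * Real.sqrt n :=
    Real.sqrt_mul hqp.le n
  have hsdiv : s = Real.sqrt n / Real.sqrt (q * p) := by
    rw [hs, Real.sqrt_div hn0.le]
  have hμ : μ = ρ * σ := by rw [hρ]; field_simp
  have hpα : p - α₀ = p * q * ρ / f := by
    rw [hα₀]; field_simp; ring
  have ht0val : t₀ = p * q * ρ / f * s := by
    rw [ht₀, hτ, hpα]
  have hνt : ν * t₀ = μ := by
    have hsn0 : (0:ℝ) < Real.sqrt n := Real.sqrt_pos.mpr hn0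
    have hsqp0 : (0:ℝ) < Real.sqrt (q * p) := Real.sqrt_pos.mpr hqp
    rw [hν, ht0val, hsdiv, hsqn, hμ]
    field_simp
    ring_nf
    rw [Real.sq_sqrt hqp.le]
    ring
  rw [hνt]
  have hφ0 : 0 < stdNormalPDF t₀ := stdNormalPDF_pos t₀
  nlinarith [mul_pos (mul_pos hs0 hs0) (mul_pos hν0 hφ0)]
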